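/- Operator Jensen inequality for isometries: if f : [0,∞) → ℝ is operator convex and V : H → K is an isometry, then for every positive semidefinite operator X on K, V† f(X) V ≥ f(V† X V) in the Loewner order. -/

import Mathlib

open Matrix MeasureTheory
open scoped Kronecker ComplexOrder

open scoped Classical
noncomputable section

variable {n : Type*} [Fintype n] [DecidableEq n]

/-- positive semidefinite square root (total; junk value `0` off PSD matrices) -/
def msqrt (A : Matrix n n ℂ) : Matrix n n ℂ :=
  if h : A.PosSemidef then
    (h.1.eigenvectorUnitary : Matrix n n ℂ) *
      Matrix.diagonal ((↑) ∘ (√·) ∘ h.1.eigenvalues) *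
      (star h.1.eigenvectorUnitary : Matrix n n ℂ)
  else 0

/-- trace norm -/
def traceNorm (A : Matrix n n ℂ) : ℝ :=
  ((msqrt (Aᴴ * A)).trace).re

/-- Hilbert–Schmidt norm -/
def hsNorm (A : Matrix n n ℂ) : ℝ :=
  Real.sqrt ((Aᴴ * A).trace).re

/-- apply a scalar function via functional calculus (total) -/
def matFun (f : ℝ → ℝ) (A : Matrix n n ℂ) : Matrix n n ℂ :=
  if h : A.IsHermitian then
    (h.eigenvectorUnitary : Matrix n n ℂ) *
      Matrix.diagonal (fun i => (f (h.eigenvalues i) : ℂ)) *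
      (h.eigenvectorUnitary : Matrix n n ℂ)ᴴ
  else 0

def minEig (A : Matrix n n ℂ) : ℝ :=
  if h : A.IsHermitian then ⨅ i, h.eigenvalues i else 0

def minPosEig (A : Matrix n n ℂ) : ℝ :=
  if h : A.IsHermitian then sInf {x : ℝ | x ≠ 0 ∧ ∃ i, h.eigenvalues i = x} else 0

def opNorm {m : Type*} [Fintype m] (A : Matrix m n ℂ) : ℝ :=
  ‖LinearMap.toContinuousLinearMap (Matrix.toEuclideanLin A)‖

variable {a b : Type*} [Fintype a] [DecidableEq a] [Fintype b] [DecidableEq b]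

/-- partial trace over the second tensor factor -/
def ptraceB (M : Matrix (a × b) (a × b) ℂ) : Matrix a a ℂ :=
  Matrix.of fun i j => ∑ k : b, M (i, k) (j, k)

/-- Petz recovery map for `σ` and the partial trace over `B` -/
def petz (σ : Matrix (a × b) (a × b) ℂ) (X : Matrix a a ℂ) : Matrix (a × b) (a × b) ℂ :=
  msqrt σ * (((msqrt (ptraceB σ))⁻¹ * X * (msqrt (ptraceB σ))⁻¹) ⊗ₖ (1 : Matrix b b ℂ)) *
    msqrt σ

/-- isometric extension of the Petz recovery channel -/
def petzV (σ : Matrix (a × b) (a × b) ℂ) : Matrix ((a × b) × (a × b)) (a × a) ℂ :=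
  (msqrt σ ⊗ₖ (1 : Matrix (a × b) (a × b) ℂ)) *
    Matrix.of (fun p q =>
      (msqrt (ptraceB σ))⁻¹ p.1.1 q.1 *
        (if p.2.1 = q.2 ∧ p.1.2 = p.2.2 then 1 else 0))

/-- canonical purification of `σ`, as a vector indexed by `n × n` -/
def purif (σ : Matrix n n ℂ) : n × n → ℂ :=
  fun p => msqrt σ p.1 p.2

/-- Petz quasi-relative entropy `Q_f(ρ‖σ)` -/
def Qf (f : ℝ → ℝ) (ρ σ : Matrix n n ℂ) : ℝ :=
  (dotProduct (star (purif σ)) ((matFun f (σ⁻¹ ⊗ₖ ρᵀ)) *ᵥ purif σ)).re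

/-- operator convexity of `f` on `[0,∞)` (Loewner order stated via `PosSemidef` differences) -/
def OpConvexOn (f : ℝ → ℝ) : Prop :=
  ∀ (k : ℕ) (A B : Matrix (Fin k) (Fin k) ℂ), A.PosSemidef → B.PosSemidef →
    ∀ lam : ℝ, 0 ≤ lam → lam ≤ 1 →
      (((lam : ℂ) • matFun f A + ((1 - lam : ℝ) : ℂ) • matFun f B)
        - matFun f ((lam : ℂ) • A + ((1 - lam : ℝ) : ℂ) • B)).PosSemidef

end

open Classical
variable {n : Type*} [Fintype n] [DecidableEq n]
variable {a b : Type*} [Fintype a] [DecidableEq a] [Fintype b] [DecidableEq b]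

section AuxJensen

open Polynomial Matrix

variable {s : Type*} [Fintype s] [DecidableEq s]
variable {t : Type*} [Fintype t] [DecidableEq t]

/-- conjugation by a unitary, as an algebra equivalence -/
noncomputable def unitaryConj (U : Matrix s s ℂ) (h1 : Uᴴ * U = 1) (h2 : U * Uᴴ = 1) :
    Matrix s s ℂ ≃ₐ[ℂ] Matrix s s ℂ where
  toFun X := Uᴴ * X * U
  invFun X := U * X * Uᴴ
  left_inv X := by
    calc U * (Uᴴ * X * U) * Uᴴ = (U * Uᴴ) * X * (U * Uᴴ) := by noncomm_ring
    _ = X := by rw [h2, one_mul, mul_one]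
  right_inv X := by
    calc Uᴴ * (U * X * Uᴴ) * U = (Uᴴ * U) * X * (Uᴴ * U) := by noncomm_ring
    _ = X := by rw [h1, one_mul, mul_one]
  map_mul' X Y := by
    calc Uᴴ * (X * Y) * U = Uᴴ * X * (U * Uᴴ) * Y * U := by rw [h2]; noncomm_ring
    _ = (Uᴴ * X * U) * (Uᴴ * Y * U) := by noncomm_ring
  map_add' X Y := by noncomm_ring
  commutes' r := by
    simp only [Algebra.algebraMap_eq_smul_one]
    rw [Matrix.mul_smul, mul_one, Matrix.smul_mul, h1]

@[simp] lemma unitaryConj_apply (U : Matrix s s ℂ) (h1 : Uᴴ * U = 1) (h2 : U * Uᴴ = 1)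
    (X : Matrix s s ℂ) : unitaryConj U h1 h2 X = Uᴴ * X * U := rfl

theorem matFun_eq_aeval {f : ℝ → ℝ} {A : Matrix s s ℂ} (hA : A.IsHermitian)
    (p : Polynomial ℝ) (hp : ∀ x ∈ spectrum ℝ A, Polynomial.eval x p = f x) :
    matFun f A = Polynomial.aeval A (p.map (algebraMap ℝ ℂ)) := by
  classical
  set U : Matrix s s ℂ := (hA.eigenvectorUnitary : Matrix s s ℂ) with hUdef
  have h2 : U * Uᴴ = 1 := by
    have := (Matrix.mem_unitaryGroup_iff).mp hA.eigenvectorUnitary.2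
    simpa [Matrix.star_eq_conjTranspose] using this
  have h1 : Uᴴ * U = 1 := by
    have := (Matrix.mem_unitaryGroup_iff').mp hA.eigenvectorUnitary.2
    simpa [Matrix.star_eq_conjTranspose] using this
  have hspec : A = U * Matrix.diagonal (fun i => ((hA.eigenvalues i : ℝ) : ℂ)) * Uᴴ := by
    exact hA.spectral_theorem
  set q : Polynomial ℂ := p.map (algebraMap ℝ ℂ) with hqdef
  have hdiag : Polynomial.aeval (Matrix.diagonal (fun i => ((hA.eigenvalues i : ℝ) : ℂ))) q
      = Matrix.diagonal (fun i => ((f (hA.eigenvalues i) : ℝ) : ℂ)) := by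
    have h3 := Polynomial.aeval_algHom_apply
      (Matrix.diagonalAlgHom ℂ : (s → ℂ) →ₐ[ℂ] Matrix s s ℂ) (fun i => ((hA.eigenvalues i : ℝ) : ℂ)) q
    rw [Matrix.diagonalAlgHom_apply] at h3
    rw [h3, Matrix.diagonalAlgHom_apply]
    refine congrArg Matrix.diagonal (funext fun i => ?_)
    have h4 := Polynomial.aeval_algHom_apply
      (Pi.evalAlgHom ℂ (fun _ : s => ℂ) i) (fun j => ((hA.eigenvalues j : ℝ) : ℂ)) q
    simp only [Pi.evalAlgHom_apply] at h4
    rw [← h4, hqdef, Polynomial.aeval_map_algebraMap]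
    have h5 : ((hA.eigenvalues i : ℝ) : ℂ) = algebraMap ℝ ℂ (hA.eigenvalues i) := rfl
    rw [h5, Polynomial.aeval_algebraMap_apply_eq_algebraMap_eval,
      hp _ (hA.eigenvalues_mem_spectrum_real i)]
    rfl
  have key : Polynomial.aeval A q = U * Matrix.diagonal
      (fun i => ((f (hA.eigenvalues i) : ℝ) : ℂ)) * Uᴴ := by
    have hAeq : A = (unitaryConj U h1 h2).symm
        (Matrix.diagonal (fun i => ((hA.eigenvalues i : ℝ) : ℂ))) := by
      simpa [unitaryConj] using hspec
    conv_lhs => rw [hAeq]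
    rw [Polynomial.aeval_algHom_apply ((unitaryConj U h1 h2).symm : _ ≃ₐ[ℂ] _) _ q, hdiag]
    rfl
  rw [key]
  simp only [matFun, dif_pos hA]
  rfl

theorem exists_interp (f : ℝ → ℝ) (S : Finset ℝ) :
    ∃ p : Polynomial ℝ, ∀ x ∈ S, Polynomial.eval x p = f x :=
  ⟨Lagrange.interpolate S id f, fun x hx =>
    Lagrange.eval_interpolate_at_node f (Set.injOn_id _) hx⟩

theorem spec_subset_interp {f : ℝ → ℝ} {A : Matrix s s ℂ} (hA : A.IsHermitian)
    {p : Polynomial ℝ} {S : Finset ℝ}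
    (hp : ∀ x ∈ S, Polynomial.eval x p = f x)
    (hsub : ∀ i, hA.eigenvalues i ∈ S) :
    ∀ x ∈ spectrum ℝ A, Polynomial.eval x p = f x := by
  intro x hx
  rw [hA.spectrum_real_eq_range_eigenvalues] at hx
  obtain ⟨i, rfl⟩ := hx
  exact hp _ (hsub i)

theorem matFun_conj_unitary (f : ℝ → ℝ) {U A : Matrix s s ℂ}
    (h1 : Uᴴ * U = 1) (h2 : U * Uᴴ = 1) (hA : A.IsHermitian) :
    matFun f (Uᴴ * A * U) = Uᴴ * matFun f A * U := by
  have hA' : (Uᴴ * A * U).IsHermitian := by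
    show (Uᴴ * A * U)ᴴ = _
    rw [Matrix.conjTranspose_mul, Matrix.conjTranspose_mul, Matrix.conjTranspose_conjTranspose,
      hA.eq, mul_assoc]
  obtain ⟨p, hp⟩ := exists_interp f (Finset.image hA.eigenvalues Finset.univ)
  have hpA : ∀ x ∈ spectrum ℝ A, Polynomial.eval x p = f x :=
    spec_subset_interp hA hp (fun i => Finset.mem_image_of_mem _ (Finset.mem_univ i))
  have hspec : spectrum ℝ (Uᴴ * A * U) = spectrum ℝ A := by
    have := AlgEquiv.spectrum_eq ((unitaryConj U h1 h2).restrictScalars ℝ) A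
    simpa using this
  rw [matFun_eq_aeval hA' p (by rw [hspec]; exact hpA), matFun_eq_aeval hA p hpA]
  exact Polynomial.aeval_algHom_apply (unitaryConj U h1 h2) A _

theorem matFun_reindex (f : ℝ → ℝ) (e : s ≃ t) {A : Matrix s s ℂ} (hA : A.IsHermitian) :
    matFun f (Matrix.reindex e e A) = Matrix.reindex e e (matFun f A) := by
  have hA' : (Matrix.reindex e e A).IsHermitian := by
    show (A.submatrix e.symm e.symm)ᴴ = _
    rw [Matrix.conjTranspose_submatrix, hA.eq]
    rfl
  obtain ⟨p, hp⟩ := exists_interp f (Finset.image hA.eigenvalues Finset.univ)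
  have hpA : ∀ x ∈ spectrum ℝ A, Polynomial.eval x p = f x :=
    spec_subset_interp hA hp (fun i => Finset.mem_image_of_mem _ (Finset.mem_univ i))
  have hspec : spectrum ℝ (Matrix.reindex e e A) = spectrum ℝ A := by
    have := AlgEquiv.spectrum_eq ((Matrix.reindexAlgEquiv ℂ ℂ e).restrictScalars ℝ) A
    simpa using this
  rw [matFun_eq_aeval hA' p (by rw [hspec]; exact hpA), matFun_eq_aeval hA p hpA]
  have := Polynomial.aeval_algHom_apply (Matrix.reindexAlgEquiv ℂ ℂ e) A
    (p.map (algebraMap ℝ ℂ))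
  simpa using this

/-- block-diagonal embedding as an algebra homomorphism -/
noncomputable def blockDiagAlgHom (s t : Type*) [Fintype s] [DecidableEq s] [Fintype t]
    [DecidableEq t] : (Matrix s s ℂ × Matrix t t ℂ) →ₐ[ℂ] Matrix (s ⊕ t) (s ⊕ t) ℂ where
  toFun P := Matrix.fromBlocks P.1 0 0 P.2
  map_one' := Matrix.fromBlocks_one
  map_mul' P Q := by
    show Matrix.fromBlocks (P.1 * Q.1) 0 0 (P.2 * Q.2)
      = Matrix.fromBlocks P.1 0 0 P.2 * Matrix.fromBlocks Q.1 0 0 Q.2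
    rw [Matrix.fromBlocks_multiply]
    simp
  map_zero' := Matrix.fromBlocks_zero
  map_add' P Q := by
    show Matrix.fromBlocks (P.1 + Q.1) 0 0 (P.2 + Q.2)
      = Matrix.fromBlocks P.1 0 0 P.2 + Matrix.fromBlocks Q.1 0 0 Q.2
    rw [Matrix.fromBlocks_add]
    simp
  commutes' r := by
    simp only [Algebra.algebraMap_eq_smul_one, Prod.smul_fst, Prod.smul_snd, Prod.fst_one,
      Prod.snd_one]
    rw [← Matrix.fromBlocks_one, Matrix.fromBlocks_smul, smul_zero, smul_zero]

theorem spectrum_fromBlocks_subset (A : Matrix s s ℂ) (B : Matrix t t ℂ) :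
    spectrum ℝ (Matrix.fromBlocks A 0 0 B) ⊆ spectrum ℝ A ∪ spectrum ℝ B := by
  intro x hx
  by_contra hc
  rw [Set.mem_union] at hc
  push_neg at hc
  obtain ⟨h1, h2⟩ := hc
  rw [spectrum.notMem_iff] at h1 h2
  rw [spectrum.mem_iff] at hx
  apply hx
  have halgS : algebraMap ℝ (Matrix s s ℂ) x = Matrix.diagonal (fun _ => (x : ℂ)) := by
    rw [Matrix.algebraMap_eq_diagonal]; rfl
  have halgT : algebraMap ℝ (Matrix t t ℂ) x = Matrix.diagonal (fun _ => (x : ℂ)) := by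
    rw [Matrix.algebraMap_eq_diagonal]; rfl
  have halgST : algebraMap ℝ (Matrix (s ⊕ t) (s ⊕ t) ℂ) x
      = Matrix.diagonal (fun _ => (x : ℂ)) := by
    rw [Matrix.algebraMap_eq_diagonal]; rfl
  have heq : algebraMap ℝ (Matrix (s ⊕ t) (s ⊕ t) ℂ) x - Matrix.fromBlocks A 0 0 B
      = Matrix.fromBlocks (algebraMap ℝ (Matrix s s ℂ) x - A) 0 0
          (algebraMap ℝ (Matrix t t ℂ) x - B) := by
    rw [halgST, halgS, halgT]
    have hd : (Matrix.diagonal (fun _ => (x : ℂ)) : Matrix (s ⊕ t) (s ⊕ t) ℂ)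
        = Matrix.fromBlocks (Matrix.diagonal (fun _ => (x : ℂ)))
            0 0 (Matrix.diagonal (fun _ => (x : ℂ))) := by
      rw [Matrix.fromBlocks_diagonal]
      congr 1
      funext i
      cases i <;> rfl
    rw [hd, sub_eq_add_neg, sub_eq_add_neg, sub_eq_add_neg, Matrix.fromBlocks_neg,
      Matrix.fromBlocks_add]
    simp
  rw [heq, Matrix.isUnit_iff_isUnit_det, Matrix.det_fromBlocks_zero₂₁]
  exact ((Matrix.isUnit_iff_isUnit_det _).mp h1).mul ((Matrix.isUnit_iff_isUnit_det _).mp h2)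

theorem matFun_fromBlocks (f : ℝ → ℝ) {A : Matrix s s ℂ} {B : Matrix t t ℂ}
    (hA : A.IsHermitian) (hB : B.IsHermitian) :
    matFun f (Matrix.fromBlocks A 0 0 B) =
      Matrix.fromBlocks (matFun f A) 0 0 (matFun f B) := by
  have hAB : (Matrix.fromBlocks A 0 0 B).IsHermitian := by
    show (Matrix.fromBlocks A 0 0 B)ᴴ = _
    rw [Matrix.fromBlocks_conjTranspose, hA.eq, hB.eq]
    simp
  obtain ⟨p, hp⟩ := exists_interp f
    (Finset.image hA.eigenvalues Finset.univ ∪ Finset.image hB.eigenvalues Finset.univ)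
  have hpA : ∀ x ∈ spectrum ℝ A, Polynomial.eval x p = f x :=
    spec_subset_interp hA hp (fun i => Finset.mem_union_left _
      (Finset.mem_image_of_mem _ (Finset.mem_univ i)))
  have hpB : ∀ x ∈ spectrum ℝ B, Polynomial.eval x p = f x :=
    spec_subset_interp hB hp (fun i => Finset.mem_union_right _
      (Finset.mem_image_of_mem _ (Finset.mem_univ i)))
  have hpAB : ∀ x ∈ spectrum ℝ (Matrix.fromBlocks A 0 0 B), Polynomial.eval x p = f x := by
    intro x hx
    rcases spectrum_fromBlocks_subset A B hx with h | h
    · exact hpA x h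
    · exact hpB x h
  rw [matFun_eq_aeval hAB p hpAB, matFun_eq_aeval hA p hpA, matFun_eq_aeval hB p hpB]
  set q : Polynomial ℂ := p.map (algebraMap ℝ ℂ) with hqdef
  have h1 : Polynomial.aeval (blockDiagAlgHom s t (A, B)) q
      = blockDiagAlgHom s t (Polynomial.aeval ((A, B) : Matrix s s ℂ × Matrix t t ℂ) q) :=
    Polynomial.aeval_algHom_apply _ _ _
  have h2 : (Polynomial.aeval ((A, B) : Matrix s s ℂ × Matrix t t ℂ) q).1
      = Polynomial.aeval A q := by
    have := Polynomial.aeval_algHom_apply (AlgHom.fst ℂ (Matrix s s ℂ) (Matrix t t ℂ))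
      ((A, B) : Matrix s s ℂ × Matrix t t ℂ) q
    simpa using this.symm
  have h3 : (Polynomial.aeval ((A, B) : Matrix s s ℂ × Matrix t t ℂ) q).2
      = Polynomial.aeval B q := by
    have := Polynomial.aeval_algHom_apply (AlgHom.snd ℂ (Matrix s s ℂ) (Matrix t t ℂ))
      ((A, B) : Matrix s s ℂ × Matrix t t ℂ) q
    simpa using this.symm
  have h4 : blockDiagAlgHom s t (A, B) = Matrix.fromBlocks A 0 0 B := rfl
  rw [← h4, h1]
  show Matrix.fromBlocks _ 0 0 _ = _
  rw [h2, h3]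

theorem matFun_zero (f : ℝ → ℝ) : matFun f (0 : Matrix t t ℂ) = ((f 0 : ℝ) : ℂ) • 1 := by
  have h0 : (0 : Matrix t t ℂ).IsHermitian := Matrix.isHermitian_zero
  have hs : ∀ x ∈ spectrum ℝ (0 : Matrix t t ℂ), Polynomial.eval x (Polynomial.C (f 0)) = f x := by
    intro x hx
    have hx0 : x = 0 := by
      by_contra hne
      rw [spectrum.mem_iff] at hx
      apply hx
      rw [sub_zero]
      exact (isUnit_iff_ne_zero.mpr hne).map (algebraMap ℝ (Matrix t t ℂ))
    rw [hx0]
    simp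
  rw [matFun_eq_aeval h0 _ hs, Polynomial.map_C, Polynomial.aeval_C,
    Algebra.algebraMap_eq_smul_one]
  rfl

theorem half_smul_add {u v : Type*} (M : Matrix u v ℂ) : (1/2 : ℂ) • M + (1/2 : ℂ) • M = M := by
  rw [← add_smul]
  norm_num

theorem half_smul_cancel {u v : Type*} (M : Matrix u v ℂ) :
    (1/2 : ℂ) • M + (1/2 : ℂ) • (-M) = 0 := by
  rw [smul_neg]
  exact add_neg_cancel _

end AuxJensen

open scoped MatrixOrder in
/-- Operator Jensen inequality for isometries: for operator convex `f` on `[0,∞)`,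
isometry `V`, and positive semidefinite `X`, `V† f(X) V ≥ f(V† X V)`. -/
theorem operator_jensen_isometry {m : Type*} [Fintype m] [DecidableEq m]
    (f : ℝ → ℝ) (hf : OpConvexOn f)
    (V : Matrix m n ℂ) (hV : Vᴴ * V = 1)
    (X : Matrix m m ℂ) (hX : X.PosSemidef) :
    (Vᴴ * matFun f X * V - matFun f (Vᴴ * X * V)).PosSemidef := by
  classical
  have hX1 : X.IsHermitian := hX.1
  have hPproj : (V * Vᴴ) * (V * Vᴴ) = V * Vᴴ := by
    calc (V * Vᴴ) * (V * Vᴴ) = V * (Vᴴ * V) * Vᴴ := by simp only [Matrix.mul_assoc]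
    _ = V * Vᴴ := by rw [hV, Matrix.mul_one]
  have hPH : (V * Vᴴ)ᴴ = V * Vᴴ := by
    rw [Matrix.conjTranspose_mul, Matrix.conjTranspose_conjTranspose]
  have hQH : (1 - V * Vᴴ : Matrix m m ℂ)ᴴ = 1 - V * Vᴴ := by
    rw [Matrix.conjTranspose_sub, Matrix.conjTranspose_one, hPH]
  have hQ : (1 - V * Vᴴ : Matrix m m ℂ).PosSemidef := by
    have hQQ : (1 - V * Vᴴ : Matrix m m ℂ)ᴴ * (1 - V * Vᴴ) = 1 - V * Vᴴ := by
      rw [hQH, sub_mul, one_mul, mul_sub, mul_one, hPproj, sub_self, sub_zero]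
    rw [← hQQ]
    exact Matrix.posSemidef_conjTranspose_mul_self _
  set D : Matrix m m ℂ := CFC.sqrt (1 - V * Vᴴ) with hDdef
  have hDpsd : D.PosSemidef := (CFC.sqrt_nonneg _).posSemidef
  have hDH : Dᴴ = D := hDpsd.1
  have hDD : D * D = 1 - V * Vᴴ := CFC.sqrt_mul_sqrt_self _ hQ.nonneg
  have hDV : D * V = 0 := by
    have h0 : (D * V)ᴴ * (D * V) = 0 := by
      calc (D * V)ᴴ * (D * V) = Vᴴ * (D * D) * V := by
            rw [Matrix.conjTranspose_mul, hDH]; simp only [Matrix.mul_assoc]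
      _ = Vᴴ * V - (Vᴴ * V) * (Vᴴ * V) := by
            rw [hDD, Matrix.mul_sub, Matrix.mul_one, Matrix.sub_mul]
            simp only [Matrix.mul_assoc]
      _ = 0 := by rw [hV]; simp
    exact Matrix.conjTranspose_mul_self_eq_zero.mp h0
  have hVD : Vᴴ * D = 0 := by
    have h0 := congrArg Matrix.conjTranspose hDV
    simpa [Matrix.conjTranspose_mul, hDH] using h0
  have hDDP : D * D + V * Vᴴ = 1 := by rw [hDD]; exact sub_add_cancel _ _
  set U₁ : Matrix (m ⊕ n) (m ⊕ n) ℂ := Matrix.fromBlocks D V Vᴴ 0 with hU₁def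
  set U₂ : Matrix (m ⊕ n) (m ⊕ n) ℂ := Matrix.fromBlocks D (-V) Vᴴ 0 with hU₂def
  have hU₁H : U₁ᴴ = U₁ := by
    rw [hU₁def, Matrix.fromBlocks_conjTranspose, hDH, Matrix.conjTranspose_conjTranspose]
    simp
  have hU₂H : U₂ᴴ = Matrix.fromBlocks D V (-Vᴴ) 0 := by
    rw [hU₂def, Matrix.fromBlocks_conjTranspose, hDH, Matrix.conjTranspose_neg,
      Matrix.conjTranspose_conjTranspose]
    simp
  have hU₁u1 : U₁ᴴ * U₁ = 1 := by
    rw [hU₁H, hU₁def, Matrix.fromBlocks_multiply]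
    simp [hDV, hVD, hV, hDDP]
  have hU₁u2 : U₁ * U₁ᴴ = 1 := by rw [hU₁H]; rw [hU₁H] at hU₁u1; exact hU₁u1
  have hU₂u1 : U₂ᴴ * U₂ = 1 := by
    rw [hU₂H, hU₂def, Matrix.fromBlocks_multiply]
    simp [hDV, hVD, hV, hDDP]
  have hU₂u2 : U₂ * U₂ᴴ = 1 := by
    rw [hU₂H, hU₂def, Matrix.fromBlocks_multiply]
    simp [hDV, hVD, hV, hDDP]
  set Y : Matrix (m ⊕ n) (m ⊕ n) ℂ := Matrix.fromBlocks X 0 0 0 with hYdef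
  have hYpsd : Y.PosSemidef := by
    have hRH : (CFC.sqrt X)ᴴ = CFC.sqrt X := (CFC.sqrt_nonneg X).posSemidef.1
    have hYeq : Y = (Matrix.fromBlocks (CFC.sqrt X) 0 0 0 : Matrix (m ⊕ n) (m ⊕ n) ℂ)
        * (Matrix.fromBlocks (CFC.sqrt X) 0 0 0 : Matrix (m ⊕ n) (m ⊕ n) ℂ)ᴴ := by
      rw [Matrix.fromBlocks_conjTranspose, hYdef, Matrix.fromBlocks_multiply]
      simp [hRH, CFC.sqrt_mul_sqrt_self X hX.nonneg]
    rw [hYeq]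
    exact Matrix.posSemidef_self_mul_conjTranspose _
  have hA₁psd : (U₁ᴴ * Y * U₁).PosSemidef := hYpsd.conjTranspose_mul_mul_same U₁
  have hA₂psd : (U₂ᴴ * Y * U₂).PosSemidef := hYpsd.conjTranspose_mul_mul_same U₂
  have hA₁eq : U₁ᴴ * Y * U₁
      = Matrix.fromBlocks (D * X * D) (D * X * V) (Vᴴ * X * D) (Vᴴ * X * V) := by
    rw [hU₁H, hU₁def, hYdef, Matrix.fromBlocks_multiply, Matrix.fromBlocks_multiply]
    simp [Matrix.mul_assoc]
  have hA₂eq : U₂ᴴ * Y * U₂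
      = Matrix.fromBlocks (D * X * D) (-(D * X * V)) (-(Vᴴ * X * D)) (Vᴴ * X * V) := by
    rw [hU₂H, hU₂def, hYdef, Matrix.fromBlocks_multiply, Matrix.fromBlocks_multiply]
    simp [Matrix.mul_assoc]
  have hS : (1/2 : ℂ) • (U₁ᴴ * Y * U₁) + (1/2 : ℂ) • (U₂ᴴ * Y * U₂)
      = Matrix.fromBlocks (D * X * D) 0 0 (Vᴴ * X * V) := by
    rw [hA₁eq, hA₂eq, Matrix.fromBlocks_smul, Matrix.fromBlocks_smul, Matrix.fromBlocks_add,
      half_smul_add, half_smul_add, half_smul_cancel, half_smul_cancel]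
  have hDXD : (D * X * D).IsHermitian := by
    show (D * X * D)ᴴ = _
    simp [Matrix.conjTranspose_mul, hDH, hX1.eq, Matrix.mul_assoc]
  have hVXV : (Vᴴ * X * V).IsHermitian := by
    show (Vᴴ * X * V)ᴴ = _
    simp [Matrix.conjTranspose_mul, hX1.eq, Matrix.mul_assoc]
  have hSherm : ((1/2 : ℂ) • (U₁ᴴ * Y * U₁) + (1/2 : ℂ) • (U₂ᴴ * Y * U₂)).IsHermitian := by
    rw [hS]
    show (Matrix.fromBlocks (D * X * D) 0 0 (Vᴴ * X * V))ᴴ = _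
    rw [Matrix.fromBlocks_conjTranspose, hDXD.eq, hVXV.eq]
    simp
  have hfS : matFun f ((1/2 : ℂ) • (U₁ᴴ * Y * U₁) + (1/2 : ℂ) • (U₂ᴴ * Y * U₂))
      = Matrix.fromBlocks (matFun f (D * X * D)) 0 0 (matFun f (Vᴴ * X * V)) := by
    rw [hS, matFun_fromBlocks f hDXD hVXV]
  have hfY : matFun f Y
      = Matrix.fromBlocks (matFun f X) 0 0 (((f 0 : ℝ) : ℂ) • 1) := by
    rw [hYdef, matFun_fromBlocks f hX1 Matrix.isHermitian_zero, matFun_zero]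
  have hfA₁ : matFun f (U₁ᴴ * Y * U₁) = U₁ᴴ * matFun f Y * U₁ :=
    matFun_conj_unitary f hU₁u1 hU₁u2 hYpsd.1
  have hfA₂ : matFun f (U₂ᴴ * Y * U₂) = U₂ᴴ * matFun f Y * U₂ :=
    matFun_conj_unitary f hU₂u1 hU₂u2 hYpsd.1
  have hG₁ : U₁ᴴ * matFun f Y * U₁
      = Matrix.fromBlocks (D * matFun f X * D + ((f 0 : ℝ) : ℂ) • (V * Vᴴ))
          (D * matFun f X * V) (Vᴴ * matFun f X * D) (Vᴴ * matFun f X * V) := by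
    rw [hfY, hU₁H, hU₁def, Matrix.fromBlocks_multiply, Matrix.fromBlocks_multiply]
    simp [Matrix.mul_smul, Matrix.smul_mul, Matrix.mul_assoc]
  have hG₂ : U₂ᴴ * matFun f Y * U₂
      = Matrix.fromBlocks (D * matFun f X * D + ((f 0 : ℝ) : ℂ) • (V * Vᴴ))
          (-(D * matFun f X * V)) (-(Vᴴ * matFun f X * D)) (Vᴴ * matFun f X * V) := by
    rw [hfY, hU₂H, hU₂def, Matrix.fromBlocks_multiply, Matrix.fromBlocks_multiply]
    simp [Matrix.mul_smul, Matrix.smul_mul, Matrix.mul_assoc]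
  have hhalfG : (1/2 : ℂ) • (U₁ᴴ * matFun f Y * U₁) + (1/2 : ℂ) • (U₂ᴴ * matFun f Y * U₂)
      = Matrix.fromBlocks (D * matFun f X * D + ((f 0 : ℝ) : ℂ) • (V * Vᴴ)) 0 0
          (Vᴴ * matFun f X * V) := by
    rw [hG₁, hG₂, Matrix.fromBlocks_smul, Matrix.fromBlocks_smul, Matrix.fromBlocks_add,
      half_smul_add, half_smul_add, half_smul_cancel, half_smul_cancel]
  -- apply operator convexity after reindexing to `Fin k`
  set e : (m ⊕ n) ≃ Fin (Fintype.card (m ⊕ n)) := Fintype.equivFin (m ⊕ n) with hedef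
  have hre₁ : (Matrix.reindex e e (U₁ᴴ * Y * U₁)).PosSemidef := by
    rw [Matrix.reindex_apply]
    exact hA₁psd.submatrix _
  have hre₂ : (Matrix.reindex e e (U₂ᴴ * Y * U₂)).PosSemidef := by
    rw [Matrix.reindex_apply]
    exact hA₂psd.submatrix _
  have hmain := hf (Fintype.card (m ⊕ n)) _ _ hre₁ hre₂ (1/2) (by norm_num) (by norm_num)
  have hc1 : ((1/2 : ℝ) : ℂ) = (1/2 : ℂ) := by norm_num
  have hc2 : ((1 - 1/2 : ℝ) : ℂ) = (1/2 : ℂ) := by norm_num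
  rw [hc1, hc2] at hmain
  rw [matFun_reindex f e hA₁psd.1, matFun_reindex f e hA₂psd.1] at hmain
  have hsum : (1/2 : ℂ) • (Matrix.reindex e e (U₁ᴴ * Y * U₁))
      + (1/2 : ℂ) • (Matrix.reindex e e (U₂ᴴ * Y * U₂))
      = Matrix.reindex e e ((1/2 : ℂ) • (U₁ᴴ * Y * U₁) + (1/2 : ℂ) • (U₂ᴴ * Y * U₂)) := by
    simp [Matrix.reindex_apply, Matrix.submatrix_add, Matrix.submatrix_smul]
  rw [hsum, matFun_reindex f e hSherm] at hmain
  have hcomb : (1/2 : ℂ) • (Matrix.reindex e e (matFun f (U₁ᴴ * Y * U₁)))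
      + (1/2 : ℂ) • (Matrix.reindex e e (matFun f (U₂ᴴ * Y * U₂)))
      - Matrix.reindex e e (matFun f ((1/2 : ℂ) • (U₁ᴴ * Y * U₁) + (1/2 : ℂ) • (U₂ᴴ * Y * U₂)))
      = Matrix.reindex e e ((1/2 : ℂ) • matFun f (U₁ᴴ * Y * U₁)
          + (1/2 : ℂ) • matFun f (U₂ᴴ * Y * U₂)
          - matFun f ((1/2 : ℂ) • (U₁ᴴ * Y * U₁) + (1/2 : ℂ) • (U₂ᴴ * Y * U₂))) := by
    simp [Matrix.reindex_apply, Matrix.submatrix_add, Matrix.submatrix_smul,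
      Matrix.submatrix_sub]
  rw [hcomb] at hmain
  have hNpsd : ((1/2 : ℂ) • matFun f (U₁ᴴ * Y * U₁) + (1/2 : ℂ) • matFun f (U₂ᴴ * Y * U₂)
      - matFun f ((1/2 : ℂ) • (U₁ᴴ * Y * U₁) + (1/2 : ℂ) • (U₂ᴴ * Y * U₂))).PosSemidef := by
    have h := hmain.submatrix e
    simpa [Matrix.reindex_apply, Matrix.submatrix_submatrix, Equiv.symm_comp_self,
      Matrix.submatrix_id_id] using h
  rw [hfA₁, hfA₂, hfS, hhalfG] at hNpsd
  have hdiff : Matrix.fromBlocks (D * matFun f X * D + ((f 0 : ℝ) : ℂ) • (V * Vᴴ)) 0 0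
        (Vᴴ * matFun f X * V)
      - Matrix.fromBlocks (matFun f (D * X * D)) 0 0 (matFun f (Vᴴ * X * V))
      = Matrix.fromBlocks
          (D * matFun f X * D + ((f 0 : ℝ) : ℂ) • (V * Vᴴ) - matFun f (D * X * D)) 0 0
          (Vᴴ * matFun f X * V - matFun f (Vᴴ * X * V)) := by
    rw [sub_eq_add_neg, Matrix.fromBlocks_neg, Matrix.fromBlocks_add]
    simp [sub_eq_add_neg]
  rw [hdiff] at hNpsd
  have hfinal := hNpsd.submatrix Sum.inr
  have hext : (Matrix.fromBlocks
        (D * matFun f X * D + ((f 0 : ℝ) : ℂ) • (V * Vᴴ) - matFun f (D * X * D)) 0 0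
        (Vᴴ * matFun f X * V - matFun f (Vᴴ * X * V))).submatrix Sum.inr Sum.inr
      = Vᴴ * matFun f X * V - matFun f (Vᴴ * X * V) := by
    ext i j
    simp [Matrix.submatrix_apply]
  rw [hext] at hfinal
  exact hfinal
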